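/- Let f : ℝ^d → ℝ be C² with L-Lipschitz continuous gradient and let x* be a strict saddle point of f. Let α ∈ (0, 1/L) and let g_α be the proximal point map g_α(x) = argmin_z [f(z) + ‖z−x‖²/(2α)]. Denote the eigenvalues of ∇²f(x*) by h₁ ≥ … ≥ h_d with h_{s+1} < 0 the largest negative one. Then g_α(x*) = x*, Dg_α(x*) = (I + α∇²f(x*))⁻¹, its eigenvalues are 1/(1 + α h_i), those with h_i ≥ 0 lie in (1/2, 1], and those with h_i < 0 are strictly greater than 1; in particular the unstable expansion factor satisfies 1/(1 + α h_{s+1}) − 1 = −α h_{s+1}/(1 + α h_{s+1}) > −α h_{s+1} > 0. -/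

import Mathlib

open InnerProductSpace
set_option maxHeartbeats 1000000


lemma descent_aux {d : ℕ} (f : EuclideanSpace ℝ (Fin d) → ℝ) (hf : ContDiff ℝ 2 f)
    (L : ℝ) (hL : 0 ≤ L) (hlip : LipschitzWith (Real.toNNReal L) (gradient f))
    (xs : EuclideanSpace ℝ (Fin d)) (hcrit : gradient f xs = 0)
    (z : EuclideanSpace ℝ (Fin d)) :
    f xs - L / 2 * ‖z - xs‖ ^ 2 ≤ f z := by
  set u := z - xs with hu
  set q : ℝ → ℝ := fun t => f (xs + t • u) + L / 2 * t ^ 2 * ‖u‖ ^ 2 with hqdef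
  have hdf : Differentiable ℝ f := hf.differentiable two_ne_zero
  have hq : ∀ t : ℝ, HasDerivAt q
      (inner ℝ (gradient f (xs + t • u)) u + L * t * ‖u‖ ^ 2) t := by
    intro t
    have h1 : HasDerivAt (fun t : ℝ => xs + t • u) u t := by
      simpa using ((hasDerivAt_id t).smul_const u).const_add xs
    have h2 : HasDerivAt (fun t : ℝ => f (xs + t • u))
        ((fderiv ℝ f (xs + t • u)) u) t :=
      (hdf (xs + t • u)).hasFDerivAt.comp_hasDerivAt t h1
    have h2' : (fderiv ℝ f (xs + t • u)) u = inner ℝ (gradient f (xs + t • u)) u := by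
      rw [gradient]
      rw [← toDual_apply_apply, LinearIsometryEquiv.apply_symm_apply]
    rw [h2'] at h2
    have h3 : HasDerivAt (fun t : ℝ => L / 2 * t ^ 2 * ‖u‖ ^ 2) (L * t * ‖u‖ ^ 2) t := by
      have := ((hasDerivAt_pow 2 t).const_mul (L / 2)).mul_const (‖u‖ ^ 2)
      exact this.congr_deriv (by ring)
    exact h2.add h3
  have hmono : MonotoneOn q (Set.Icc (0:ℝ) 1) := by
    apply monotoneOn_of_deriv_nonneg (convex_Icc 0 1)
    · exact fun t _ => ((hq t).continuousAt).continuousWithinAt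
    · exact fun t _ => ((hq t).differentiableAt).differentiableWithinAt
    · intro t ht
      rw [interior_Icc] at ht
      rw [(hq t).deriv]
      have hbd : ‖gradient f (xs + t • u)‖ ≤ L * (t * ‖u‖) := by
        calc ‖gradient f (xs + t • u)‖
            = dist (gradient f (xs + t • u)) (gradient f xs) := by
              rw [hcrit, dist_zero_right]
          _ ≤ Real.toNNReal L * dist (xs + t • u) xs := hlip.dist_le_mul _ _
          _ = L * (t * ‖u‖) := by
              rw [Real.coe_toNNReal L hL, dist_eq_norm]
              simp [norm_smul, abs_of_pos ht.1]
      have hinner := abs_real_inner_le_norm (gradient f (xs + t • u)) u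
      have hun : (0:ℝ) ≤ ‖u‖ := norm_nonneg u
      nlinarith [abs_le.mp (le_trans hinner (mul_le_mul_of_nonneg_right hbd hun))]
  have h01 := hmono (Set.left_mem_Icc.mpr zero_le_one) (Set.right_mem_Icc.mpr zero_le_one)
    zero_le_one
  have hq0 : q 0 = f xs := by simp [hqdef]
  have hq1 : q 1 = f z + L / 2 * ‖u‖ ^ 2 := by simp [hqdef, hu]
  rw [hq0, hq1] at h01
  linarith

lemma foc_aux {d : ℕ} (f : EuclideanSpace ℝ (Fin d) → ℝ) (hf : ContDiff ℝ 2 f)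
    (α : ℝ) (hα0 : 0 < α)
    (g : EuclideanSpace ℝ (Fin d) → EuclideanSpace ℝ (Fin d))
    (hargmin : ∀ x z, z ≠ g x →
      f (g x) + ‖g x - x‖ ^ 2 / (2 * α) < f z + ‖z - x‖ ^ 2 / (2 * α))
    (x : EuclideanSpace ℝ (Fin d)) :
    g x + α • gradient f (g x) = x := by
  have hdf : Differentiable ℝ f := hf.differentiable two_ne_zero
  set F : EuclideanSpace ℝ (Fin d) → ℝ := fun z => f z + ‖z - x‖ ^ 2 / (2 * α) with hF
  have hmin : IsLocalMin F (g x) := by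
    apply Filter.Eventually.of_forall
    intro z
    rcases eq_or_ne z (g x) with rfl | hz
    · exact le_rfl
    · exact (hargmin x z hz).le
  have hinnerSL : ∀ y : EuclideanSpace ℝ (Fin d),
      innerSL ℝ y = toDual ℝ (EuclideanSpace ℝ (Fin d)) y := by
    intro y; ext w; simp [toDual_apply_apply]
  have hf1 : HasFDerivAt f (toDual ℝ (EuclideanSpace ℝ (Fin d)) (gradient f (g x))) (g x) :=
    (hdf (g x)).hasGradientAt.hasFDerivAt
  have hf2 : HasFDerivAt (fun z : EuclideanSpace ℝ (Fin d) => ‖z - x‖ ^ 2)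
      (2 • (innerSL ℝ (g x - x))) (g x) := by
    have := ((hasFDerivAt_id (g x)).sub_const x).norm_sq
    simpa using this
  have hf3 : HasFDerivAt (fun z : EuclideanSpace ℝ (Fin d) => ‖z - x‖ ^ 2 / (2 * α))
      ((2 * α)⁻¹ • (2 • (innerSL ℝ (g x - x)))) (g x) := by
    have := hf2.const_mul ((2 * α)⁻¹)
    simpa [div_eq_inv_mul] using this
  have hFd : HasFDerivAt F
      (toDual ℝ (EuclideanSpace ℝ (Fin d)) (gradient f (g x))
        + (2 * α)⁻¹ • (2 • (innerSL ℝ (g x - x)))) (g x) :=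
    hf1.add hf3
  have hzero := hmin.hasFDerivAt_eq_zero hFd
  have hvec : gradient f (g x) + α⁻¹ • (g x - x) = 0 := by
    apply (toDual ℝ (EuclideanSpace ℝ (Fin d))).injective
    rw [map_add, map_smul, map_zero, ← hinnerSL, ← hzero]
    congr 1
    rw [hinnerSL, two_nsmul, ← two_smul ℝ, smul_smul]
    congr 1
    field_simp
  have hkey : α • gradient f (g x) = -(g x - x) := by
    have h2 := congrArg (fun w => α • w) hvec
    simp only [smul_add, smul_zero, smul_smul] at h2
    rw [mul_inv_cancel₀ (ne_of_gt hα0), one_smul] at h2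
    linear_combination (norm := abel) h2
  rw [hkey]; abel



/-- Proximal point map at a strict saddle: if `x*` is a strict saddle of the `C²` function
`f` with `L`-Lipschitz gradient, `α ∈ (0, 1/L)` and `g_α x = argmin_z f z + ‖z−x‖²/(2α)`,
then `g_α(x*) = x*`, `Dg_α(x*) = (I + α∇²f(x*))⁻¹` with eigenvalues `1/(1+α h_i)` on the
eigenvectors `v_i` of `∇²f(x*)`; eigenvalues with `h_i ≥ 0` lie in `(1/2, 1]`, those with
`h_i < 0` exceed `1`, and for the largest negative eigenvalue `h_j` the expansion factor
satisfies `1/(1+α h_j) − 1 = −α h_j/(1+α h_j) > −α h_j > 0`. -/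
theorem pp_strict_saddle_instability {d : ℕ}
    (f : EuclideanSpace ℝ (Fin d) → ℝ) (hf : ContDiff ℝ 2 f)
    (L : ℝ) (hL : 0 < L) (hlip : LipschitzWith (Real.toNNReal L) (gradient f))
    (α : ℝ) (hα0 : 0 < α) (hα1 : α < 1 / L)
    (xs : EuclideanSpace ℝ (Fin d)) (hcrit : gradient f xs = 0)
    (h : Fin d → ℝ) (v : Fin d → EuclideanSpace ℝ (Fin d))
    (hON : Orthonormal ℝ v)
    (heig : ∀ i, fderiv ℝ (gradient f) xs (v i) = h i • v i)
    (j : Fin d) (hj : h j < 0) (hjmax : ∀ i, h i < 0 → h i ≤ h j)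
    (g : EuclideanSpace ℝ (Fin d) → EuclideanSpace ℝ (Fin d))
    (hargmin : ∀ x z, z ≠ g x →
      f (g x) + ‖g x - x‖ ^ 2 / (2 * α) < f z + ‖z - x‖ ^ 2 / (2 * α)) :
    g xs = xs ∧
    (∃ A : EuclideanSpace ℝ (Fin d) →L[ℝ] EuclideanSpace ℝ (Fin d),
      HasFDerivAt g A xs ∧
      (ContinuousLinearMap.id ℝ (EuclideanSpace ℝ (Fin d))
          + α • fderiv ℝ (gradient f) xs).comp A
        = ContinuousLinearMap.id ℝ (EuclideanSpace ℝ (Fin d)) ∧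
      A.comp (ContinuousLinearMap.id ℝ (EuclideanSpace ℝ (Fin d))
          + α • fderiv ℝ (gradient f) xs)
        = ContinuousLinearMap.id ℝ (EuclideanSpace ℝ (Fin d)) ∧
      (∀ i, A (v i) = (1 + α * h i)⁻¹ • v i)) ∧
    (∀ i, 0 ≤ h i → (1/2 : ℝ) < (1 + α * h i)⁻¹ ∧ (1 + α * h i)⁻¹ ≤ 1) ∧
    (∀ i, h i < 0 → 1 < (1 + α * h i)⁻¹) ∧
    ((1 + α * h j)⁻¹ - 1 = -(α * h j) / (1 + α * h j) ∧
      -(α * h j) < -(α * h j) / (1 + α * h j) ∧ 0 < -(α * h j)) := by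
  have hL' : (Real.toNNReal L : ℝ) = L := Real.coe_toNNReal L hL.le
  have hαL : α * L < 1 := by
    have := (lt_div_iff₀ hL).1 hα1; linarith
  have hkey : ∀ z, f xs - L / 2 * ‖z - xs‖ ^ 2 ≤ f z :=
    descent_aux f hf L hL.le hlip xs hcrit
  -- Part 1 : g xs = xs
  have hgxs : g xs = xs := by
    by_contra hne
    have h1 := hargmin xs xs (fun e => hne e.symm)
    simp only [sub_self, norm_zero] at h1
    have h2 := hkey (g xs)
    set a := ‖g xs - xs‖ with ha
    have ha0 : 0 ≤ a := norm_nonneg _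
    have hq : L / 2 * a ^ 2 ≤ a ^ 2 / (2 * α) := by
      rw [le_div_iff₀ (by positivity)]
      nlinarith [sq_nonneg a]
    norm_num at h1
    linarith
  -- the quantitative bound
  have hbound : ∀ x, ‖g x - xs‖ ≤ 2 / (1 - α * L) * ‖x - xs‖ := by
    intro x
    have hc : 0 < 1 - α * L := by linarith
    rcases eq_or_ne xs (g x) with heq | hne
    · rw [← heq]; simp; positivity
    · have h1 := hargmin x xs hne
      have h2 := hkey (g x)
      set a := ‖g x - xs‖ with ha
      set b := ‖x - xs‖ with hb
      set w := ‖g x - x‖ with hw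
      have hxsx : ‖xs - x‖ = b := by rw [hb, norm_sub_rev]
      rw [hxsx] at h1
      have ha0 : 0 ≤ a := norm_nonneg _
      have hb0 : 0 ≤ b := norm_nonneg _
      have hw0 : 0 ≤ w := norm_nonneg _
      have htri : a ≤ w + b := by
        rw [ha, hw, hb]
        have := dist_triangle (g x) x xs
        simpa [dist_eq_norm] using this
      have h3 : w ^ 2 < α * L * a ^ 2 + b ^ 2 := by
        have h12 : w ^ 2 / (2 * α) < L / 2 * a ^ 2 + b ^ 2 / (2 * α) := by linarith
        calc w ^ 2 = w ^ 2 / (2 * α) * (2 * α) := by field_simp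
          _ < (L / 2 * a ^ 2 + b ^ 2 / (2 * α)) * (2 * α) :=
              mul_lt_mul_of_pos_right h12 (by positivity)
          _ = α * L * a ^ 2 + b ^ 2 := by field_simp
      rw [div_mul_eq_mul_div, le_div_iff₀ hc]
      rcases le_or_gt a b with hab | hab
      · nlinarith [mul_nonneg (mul_nonneg hα0.le hL.le) ha0]
      · have h4 : (a - b) ^ 2 ≤ w ^ 2 := by
          apply pow_le_pow_left₀ (by linarith) (by linarith)
        have ha' : 0 < a := lt_of_le_of_lt hb0 hab
        nlinarith [h4, h3, ha']
  -- continuity of g at xs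
  have hcont : ContinuousAt g xs := by
    unfold ContinuousAt
    rw [hgxs, tendsto_iff_norm_sub_tendsto_zero]
    apply squeeze_zero (fun x => norm_nonneg _) hbound
    have : Filter.Tendsto (fun x : EuclideanSpace ℝ (Fin d) => 2 / (1 - α * L) * ‖x - xs‖)
        (nhds xs) (nhds (2 / (1 - α * L) * ‖xs - xs‖)) :=
      (((continuous_id.sub continuous_const).norm).tendsto xs).const_mul _
    simpa using this
  -- Hessian bound
  set B := fderiv ℝ (gradient f) xs with hB
  have hBnorm : ‖B‖ ≤ L := by
    have := norm_fderiv_le_of_lipschitz ℝ hlip (x₀ := xs)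
    rwa [hL'] at this
  have hvnorm : ∀ i, ‖v i‖ = 1 := fun i => hON.1 i
  have habs : ∀ i, |h i| ≤ L := by
    intro i
    have h1 : ‖B (v i)‖ ≤ ‖B‖ * ‖v i‖ := B.le_opNorm _
    rw [heig i, norm_smul, hvnorm i, Real.norm_eq_abs, mul_one, mul_one] at h1
    exact h1.trans hBnorm
  have hpos : ∀ i, 0 < 1 + α * h i := by
    intro i
    have h1 : -L ≤ h i := (abs_le.1 (habs i)).1
    nlinarith
  have hhle : ∀ i, α * h i < 1 := by
    intro i
    have h1 : h i ≤ L := (abs_le.1 (habs i)).2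
    nlinarith
  -- basis and the inverse map A
  have hd : Nonempty (Fin d) := ⟨j⟩
  let b : Module.Basis (Fin d) ℝ (EuclideanSpace ℝ (Fin d)) :=
    basisOfLinearIndependentOfCardEqFinrank hON.linearIndependent (by rw [Fintype.card_fin, finrank_euclideanSpace_fin])
  have hbv : ⇑b = v := coe_basisOfLinearIndependentOfCardEqFinrank _ _
  let A : EuclideanSpace ℝ (Fin d) →L[ℝ] EuclideanSpace ℝ (Fin d) :=
    LinearMap.toContinuousLinearMap (b.constr ℝ (fun i => (1 + α * h i)⁻¹ • v i))
  have hAv : ∀ i, A (v i) = (1 + α * h i)⁻¹ • v i := by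
    intro i
    show (b.constr ℝ (fun i => (1 + α * h i)⁻¹ • v i)) (v i) = _
    conv_lhs => rw [← congrFun hbv i]
    rw [Module.Basis.constr_basis]
  set T : EuclideanSpace ℝ (Fin d) →L[ℝ] EuclideanSpace ℝ (Fin d) :=
    ContinuousLinearMap.id ℝ (EuclideanSpace ℝ (Fin d)) + α • B with hT
  have hTv : ∀ i, T (v i) = (1 + α * h i) • v i := by
    intro i
    rw [hT]
    simp only [ContinuousLinearMap.add_apply, ContinuousLinearMap.coe_smul',
      Pi.smul_apply, ContinuousLinearMap.id_apply]
    rw [hB, heig i, smul_smul, add_smul, one_smul]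
  have hTA : T.comp A = ContinuousLinearMap.id ℝ (EuclideanSpace ℝ (Fin d)) := by
    apply ContinuousLinearMap.coe_injective
    apply Module.Basis.ext b
    intro i
    rw [congrFun hbv i]
    simp only [ContinuousLinearMap.coe_comp, LinearMap.coe_comp, Function.comp_apply,
      ContinuousLinearMap.coe_coe, ContinuousLinearMap.coe_id, LinearMap.id_coe, id_eq]
    rw [hAv i, map_smul, hTv i, smul_smul, inv_mul_cancel₀ (hpos i).ne', one_smul]
  have hAT : A.comp T = ContinuousLinearMap.id ℝ (EuclideanSpace ℝ (Fin d)) := by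
    apply ContinuousLinearMap.coe_injective
    apply Module.Basis.ext b
    intro i
    rw [congrFun hbv i]
    simp only [ContinuousLinearMap.coe_comp, LinearMap.coe_comp, Function.comp_apply,
      ContinuousLinearMap.coe_coe, ContinuousLinearMap.coe_id, LinearMap.id_coe, id_eq]
    rw [hTv i, map_smul, hAv i, smul_smul, mul_inv_cancel₀ (hpos i).ne', one_smul]
  -- derivative of g at xs
  have hgrad1 : ContDiff ℝ 1 (gradient f) := by
    have h1 : ContDiff ℝ 1 (fderiv ℝ f) := hf.fderiv_right (by norm_num)
    have h2 : gradient f = fun y =>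
        (toDual ℝ (EuclideanSpace ℝ (Fin d))).symm (fderiv ℝ f y) := rfl
    rw [h2]
    exact ((toDual ℝ (EuclideanSpace ℝ (Fin d))).symm.contDiff).comp h1
  have hBd : HasFDerivAt (gradient f) B xs :=
    (hgrad1.differentiable one_ne_zero xs).hasFDerivAt
  have hPhi : HasFDerivAt (fun z => z + α • gradient f z) T xs :=
    (hasFDerivAt_id xs).add (hBd.const_smul α)
  let T' := ContinuousLinearEquiv.equivOfInverse T A
    (fun y => by
      have := congrFun (congrArg (fun (m : _ →L[ℝ] _) => (m : _ → _)) hAT) y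
      simpa using this)
    (fun y => by
      have := congrFun (congrArg (fun (m : _ →L[ℝ] _) => (m : _ → _)) hTA) y
      simpa using this)
  have hfoc := foc_aux f hf α hα0 g hargmin
  have hfoc' : ∀ x, (fun z => z + α • gradient f z) (g x) = x := hfoc
  have hPhi' : HasFDerivAt (fun z => z + α • gradient f z) ((T' : _ →L[ℝ] _)) (g xs) := by
    rw [hgxs]; exact hPhi
  have hgd : HasFDerivAt g ((T'.symm : _ →L[ℝ] _)) xs :=
    HasFDerivAt.of_local_left_inverse hcont hPhi' (Filter.Eventually.of_forall hfoc')
  have hsymmA : ((T'.symm : _ →L[ℝ] _) :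
      EuclideanSpace ℝ (Fin d) →L[ℝ] EuclideanSpace ℝ (Fin d)) = A := rfl
  rw [hsymmA] at hgd
  refine ⟨hgxs, ⟨A, hgd, hTA, hAT, hAv⟩, ?_, ?_, ?_, ?_, ?_⟩
  · intro i hi
    have h1 := hpos i
    have h2 := hhle i
    have h3 : 0 ≤ α * h i := mul_nonneg hα0.le hi
    constructor
    · rw [show ((1:ℝ)/2) = (2:ℝ)⁻¹ by norm_num]
      exact (inv_lt_inv₀ (by norm_num) h1).mpr (by linarith)
    · apply inv_le_one_of_one_le₀; linarith
  · intro i hi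
    have h1 := hpos i
    have h2 : α * h i < 0 := mul_neg_of_pos_of_neg hα0 hi
    exact (one_lt_inv₀ h1).2 (by linarith)
  · have h1 := hpos j
    field_simp
    ring
  · have h1 := hpos j
    have h2 : α * h j < 0 := mul_neg_of_pos_of_neg hα0 hj
    rw [lt_div_iff₀ h1]
    nlinarith
  · nlinarith
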